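/- For a probability vector λ1 ≥ λ2 ≥ ... ≥ λd ≥ 0 with ∑ λi = 1 and fixed purity ∑ λi² = γ ∈ [1/d, 1], the Shannon entropy -∑ λi log λi attains its maximum at the spectrum λ1 = 1/d + √((d-1)/d · (γ - 1/d)) and λ2 = ... = λd = (1 - λ1)/(d-1). -/

import Mathlib

open Real Set

lemma aux_two_log_le {t : ℝ} (ht : 1 ≤ t) : 2 * Real.log t ≤ t - 1/t := by
  have HD : ∀ x : ℝ, 0 < x → HasDerivAt (fun x : ℝ => x - 1/x - 2 * Real.log x)
      (1 - (-(1/x^2)) - 2 * (1/x)) x := by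
    intro x hx0
    have h1 : HasDerivAt (fun x : ℝ => 1/x) (-(1/x^2)) x := by
      simpa using (hasDerivAt_inv (ne_of_gt hx0))
    have h2 : HasDerivAt Real.log (1/x) x := by
      simpa using Real.hasDerivAt_log (ne_of_gt hx0)
    exact ((hasDerivAt_id x).sub h1).sub ((h2.const_mul 2))
  have key : MonotoneOn (fun x : ℝ => x - 1/x - 2 * Real.log x) (Set.Ici 1) := by
    apply monotoneOn_of_deriv_nonneg (convex_Ici 1)
    · intro x hx
      have hx0 : (0:ℝ) < x := lt_of_lt_of_le zero_lt_one hx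
      exact (HD x hx0).continuousAt.continuousWithinAt
    · intro x hx
      rw [interior_Ici] at hx
      have hx0 : (0:ℝ) < x := by linarith [mem_Ioi.mp hx]
      exact (HD x hx0).differentiableAt.differentiableWithinAt
    · intro x hx
      rw [interior_Ici] at hx
      have hx1 : (1:ℝ) < x := hx
      have hx0 : (0:ℝ) < x := by linarith
      rw [(HD x hx0).deriv]
      have hx3 : (0:ℝ) < x^2*x := by positivity
      rw [← sub_nonneg]
      have : 1 - -(1/x^2) - 2*(1/x) - 0 = (x^2 - 2*x + 1)/(x^2) := by field_simp; ring
      rw [this]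
      apply div_nonneg _ (by positivity)
      nlinarith [sq_nonneg (x-1)]
  have h := key (self_mem_Ici) ht ht
  simp only [Real.log_one] at h
  linarith [h]

lemma aux_chord_log {v x : ℝ} (hv : 0 < v) (hx : v ≤ x) :
    2*(x-v) ≤ (x+v)*(Real.log x - Real.log v) := by
  have HD : ∀ y : ℝ, 0 < y → HasDerivAt (fun y : ℝ => (y+1) * Real.log y - 2*(y-1))
      ((1) * Real.log y + (y+1) * (1/y) - 2*1) y := by
    intro y hy0
    have h2 : HasDerivAt Real.log (1/y) y := by
      simpa using Real.hasDerivAt_log (ne_of_gt hy0)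
    exact (((hasDerivAt_id y).add_const 1).mul h2).sub
      (((hasDerivAt_id y).sub_const 1).const_mul 2)
  have key : MonotoneOn (fun y : ℝ => (y+1) * Real.log y - 2*(y-1)) (Set.Ici 1) := by
    apply monotoneOn_of_deriv_nonneg (convex_Ici 1)
    · intro y hy
      exact (HD y (lt_of_lt_of_le zero_lt_one hy)).continuousAt.continuousWithinAt
    · intro y hy
      rw [interior_Ici] at hy
      exact (HD y (lt_trans zero_lt_one hy)).differentiableAt.differentiableWithinAt
    · intro y hy
      rw [interior_Ici] at hy
      have hy1 : (1:ℝ) < y := hy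
      have hy0 : (0:ℝ) < y := by linarith
      rw [(HD y hy0).deriv]
      have hlog : Real.log (1/y) ≤ 1/y - 1 := Real.log_le_sub_one_of_pos (by positivity)
      rw [Real.log_div one_ne_zero (ne_of_gt hy0), Real.log_one] at hlog
      have : (y+1)*(1/y) = 1 + 1/y := by field_simp
      rw [this]
      linarith
  have hx0 : (0:ℝ) < x := lt_of_lt_of_le hv hx
  have h := key (self_mem_Ici) (show (1:ℝ) ≤ x/v from (one_le_div hv).mpr hx)
    ((one_le_div hv).mpr hx)
  simp only [Real.log_one, Real.log_div (ne_of_gt hx0) (ne_of_gt hv)] at h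
  have h2 : 0 ≤ (x/v+1)*(Real.log x - Real.log v) - 2*(x/v-1) := by
    simpa using h
  have h3 : 0 ≤ ((x+v)*(Real.log x - Real.log v) - 2*(x-v))/v := by
    have e : ((x+v)*(Real.log x - Real.log v) - 2*(x-v))/v
        = (x/v+1)*(Real.log x - Real.log v) - 2*(x/v-1) := by field_simp
    rw [e]; exact h2
  have := (div_nonneg_iff.mp h3)
  rcases this with ⟨h4, _⟩ | ⟨_, h5⟩
  · linarith
  · linarith

-- derivative of the KL-type numerator
lemma aux_kl_hasDeriv (v : ℝ) {y : ℝ} (hy : 0 < y) :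
    HasDerivAt (fun y : ℝ => y*(Real.log y - Real.log v) - y + v)
      (Real.log y - Real.log v) y := by
  have h1 : HasDerivAt (fun y : ℝ => y * Real.log y) (Real.log y + 1) y :=
    Real.hasDerivAt_mul_log (ne_of_gt hy)
  have h2 : HasDerivAt (fun y : ℝ => y * Real.log v) (Real.log v) y := by
    simpa using (hasDerivAt_id y).mul_const (Real.log v)
  have h3 := ((h1.sub h2).sub (hasDerivAt_id y)).add_const v
  have e : ∀ y : ℝ, y*(Real.log y - Real.log v) - y + v
      = y * Real.log y - y * Real.log v - y + v := by intro y; ring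
  simp only [e]
  exact h3.congr_deriv (by ring)

lemma aux_kl_lower_left {v x : ℝ} (hv : 0 < v) (hx0 : 0 ≤ x) (hxv : x ≤ v) :
    (x - v)^2/(2*v) ≤ x*(Real.log x - Real.log v) - x + v := by
  rcases eq_or_lt_of_le hx0 with h0 | hx0'
  · subst h0
    simp only [zero_mul, Real.log_zero]
    rw [div_le_iff₀ (by positivity)]
    nlinarith
  · -- x > 0
    have HD : ∀ y : ℝ, 0 < y → HasDerivAt
        (fun y : ℝ => y*(Real.log y - Real.log v) - y + v - (y-v)^2/(2*v))
        ((Real.log y - Real.log v) - (2*(y-v)^1*1)/(2*v)) y := by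
      intro y hy
      exact (aux_kl_hasDeriv v hy).sub
        ((((hasDerivAt_id y).sub_const v).pow 2).div_const (2*v))
    have key : AntitoneOn
        (fun y : ℝ => y*(Real.log y - Real.log v) - y + v - (y-v)^2/(2*v))
        (Set.Icc x v) := by
      apply antitoneOn_of_deriv_nonpos (convex_Icc x v)
      · intro y hy
        exact (HD y (lt_of_lt_of_le hx0' hy.1)).continuousAt.continuousWithinAt
      · intro y hy
        rw [interior_Icc] at hy
        exact (HD y (lt_trans hx0' hy.1)).differentiableAt.differentiableWithinAt
      · intro y hy
        rw [interior_Icc] at hy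
        have hy0 : 0 < y := lt_trans hx0' hy.1
        rw [(HD y hy0).deriv]
        have hlog : Real.log y - Real.log v ≤ y/v - 1 := by
          have := Real.log_le_sub_one_of_pos (show (0:ℝ) < y/v by positivity)
          rwa [Real.log_div (ne_of_gt hy0) (ne_of_gt hv)] at this
        have e : (2*(y-v)^1*1)/(2*v) = y/v - 1 := by field_simp
        rw [e]
        linarith
    have h := key (Set.mem_Icc.mpr ⟨le_refl x, hxv⟩) (Set.mem_Icc.mpr ⟨hxv, le_refl v⟩) hxv
    simp only [sub_self, Real.log_zero] at h
    have h0 : v * 0 - v + v - 0^2/(2*v) = 0 := by ring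
    rw [h0] at h
    linarith

lemma aux_c_small {u v : ℝ} (hv : 0 < v) (hvu : v ≤ u) :
    2*v*(u*(Real.log u - Real.log v) - u + v) ≤ (u-v)^2 := by
  have hu : 0 < u := lt_of_lt_of_le hv hvu
  set a := Real.sqrt u with ha
  set b := Real.sqrt v with hb
  have ha2 : a^2 = u := Real.sq_sqrt hu.le
  have hb2 : b^2 = v := Real.sq_sqrt hv.le
  have ha0 : 0 < a := Real.sqrt_pos.mpr hu
  have hb0 : 0 < b := Real.sqrt_pos.mpr hv
  have hba : b ≤ a := Real.sqrt_le_sqrt hvu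
  have ht1 : (1:ℝ) ≤ a/b := (one_le_div hb0).mpr hba
  have h1 := aux_two_log_le ht1
  rw [Real.log_div (ne_of_gt ha0) (ne_of_gt hb0)] at h1
  have hla : Real.log a = Real.log u / 2 := Real.log_sqrt hu.le
  have hlb : Real.log b = Real.log v / 2 := Real.log_sqrt hv.le
  rw [hla, hlb] at h1
  have e1 : 2*(Real.log u / 2 - Real.log v / 2) = Real.log u - Real.log v := by ring
  rw [e1] at h1
  have e2 : a/b - 1/(a/b) = (u - v)/(a*b) := by
    rw [← ha2, ← hb2]; field_simp
  rw [e2] at h1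
  have hab : 0 < a*b := by positivity
  have hlog : a*b*(Real.log u - Real.log v) ≤ u - v := by
    have := mul_le_mul_of_nonneg_left h1 hab.le
    calc a*b*(Real.log u - Real.log v) ≤ a*b*((u-v)/(a*b)) := this
    _ = u - v := by field_simp
  have step1 : 2*v*(u*(Real.log u - Real.log v)) ≤ 2*(a*b)*(u-v) := by
    have h2 := mul_le_mul_of_nonneg_left hlog (by positivity : (0:ℝ) ≤ 2*(a*b))
    calc 2*v*(u*(Real.log u - Real.log v)) = 2*(a*b)*(a*b*(Real.log u - Real.log v)) := by
          rw [← ha2, ← hb2]; ring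
    _ ≤ 2*(a*b)*(u-v) := h2
  have step2 : 2*(a*b)*(u-v) ≤ (u+v)*(u-v) := by
    have h3 : 2*(a*b) ≤ u + v := by nlinarith [sq_nonneg (a-b)]
    exact mul_le_mul_of_nonneg_right h3 (sub_nonneg.mpr hvu)
  nlinarith [step1, step2]

lemma aux_kl_ratio {v x u : ℝ} (hv : 0 < v) (hvx : v < x) (hxu : x ≤ u) :
    (u*(Real.log u - Real.log v) - u + v) * (x-v)^2
      ≤ (x*(Real.log x - Real.log v) - x + v) * (u-v)^2 := by
  set ψ : ℝ → ℝ := fun y => (y*(Real.log y - Real.log v) - y + v)/((y-v)^2) with hψ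
  have HD : ∀ y : ℝ, v < y → HasDerivAt ψ
      (((Real.log y - Real.log v) * (y-v)^2
        - (y*(Real.log y - Real.log v) - y + v) * (2*(y-v)^1*1))/((y-v)^2)^2) y := by
    intro y hy
    have hy0 : 0 < y := lt_trans hv hy
    exact (aux_kl_hasDeriv v hy0).div (((hasDerivAt_id y).sub_const v).pow 2)
      (pow_ne_zero 2 (sub_ne_zero.mpr (ne_of_gt hy)))
  have key : AntitoneOn ψ (Set.Icc x u) := by
    apply antitoneOn_of_deriv_nonpos (convex_Icc x u)
    · intro y hy
      exact (HD y (lt_of_lt_of_le hvx hy.1)).continuousAt.continuousWithinAt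
    · intro y hy
      rw [interior_Icc] at hy
      exact (HD y (lt_trans hvx hy.1)).differentiableAt.differentiableWithinAt
    · intro y hy
      rw [interior_Icc] at hy
      have hvy : v < y := lt_trans hvx hy.1
      rw [(HD y hvy).deriv]
      apply div_nonpos_of_nonpos_of_nonneg _ (by positivity)
      have hc := aux_chord_log hv hvy.le
      have e : (Real.log y - Real.log v) * (y-v)^2
          - (y*(Real.log y - Real.log v) - y + v) * (2*(y-v)^1*1)
          = (y-v) * (2*(y-v) - (y+v)*(Real.log y - Real.log v)) := by ring
      rw [e]
      exact mul_nonpos_of_nonneg_of_nonpos (by linarith) (by linarith)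
  have h := key (Set.mem_Icc.mpr ⟨le_refl x, hxu⟩) (Set.mem_Icc.mpr ⟨hxu, le_refl u⟩) hxu
  -- h : ψ u ≤ ψ x
  rw [hψ] at h
  simp only at h
  have hx2 : (0:ℝ) < (x-v)^2 := pow_pos (sub_pos.mpr hvx) 2
  have hu2 : (0:ℝ) < (u-v)^2 := pow_pos (sub_pos.mpr (lt_of_lt_of_le hvx hxu)) 2
  rw [div_le_div_iff₀ hu2 hx2] at h
  linarith

lemma aux_kl_quad {u v x : ℝ} (hv : 0 < v) (hvu : v ≤ u) (hx0 : 0 ≤ x) (hxu : x ≤ u) :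
    (u*(Real.log u - Real.log v) - u + v)/(u-v)^2 * (x-v)^2
      ≤ x*(Real.log x - Real.log v) - x + v := by
  rcases le_or_gt x v with hxv | hvx
  · have hc : (u*(Real.log u - Real.log v) - u + v)/(u-v)^2 ≤ 1/(2*v) := by
      rcases eq_or_lt_of_le hvu with he | hlt
      · subst he
        simp only [sub_self]
        rw [zero_pow (by norm_num), div_zero]
        positivity
      · rw [div_le_div_iff₀ (pow_pos (sub_pos.mpr hlt) 2) (by positivity)]
        have := aux_c_small hv hvu
        nlinarith
    calc (u*(Real.log u - Real.log v) - u + v)/(u-v)^2 * (x-v)^2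
        ≤ 1/(2*v) * (x-v)^2 := mul_le_mul_of_nonneg_right hc (sq_nonneg _)
      _ = (x-v)^2/(2*v) := by ring
      _ ≤ _ := aux_kl_lower_left hv hx0 hxv
  · have hvu' : v < u := lt_of_lt_of_le hvx hxu
    have h := aux_kl_ratio hv hvx hxu
    have hu2 : (0:ℝ) < (u-v)^2 := pow_pos (sub_pos.mpr hvu') 2
    rw [div_mul_eq_mul_div, div_le_iff₀ hu2]
    linarith

set_option maxHeartbeats 1000000 in
theorem stmt1 (d : ℕ) (hd : 2 ≤ d) (γ : ℝ) (hγ1 : 1/(d:ℝ) ≤ γ) (hγ2 : γ ≤ 1)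
    (lam : Fin d → ℝ) (hmono : ∀ i j : Fin d, i ≤ j → lam j ≤ lam i)
    (hpos : ∀ i, 0 ≤ lam i) (hsum : ∑ i, lam i = 1) (hpur : ∑ i, lam i ^ 2 = γ) :
    let l1 : ℝ := 1/(d:ℝ) + Real.sqrt (((d:ℝ)-1)/(d:ℝ) * (γ - 1/(d:ℝ)))
    (-∑ i, lam i * Real.logb 2 (lam i)) ≤
      -(l1 * Real.logb 2 l1) -
        ((d:ℝ)-1) * ((1 - l1)/((d:ℝ)-1) * Real.logb 2 ((1 - l1)/((d:ℝ)-1))) := by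
  intro l1
  set D : ℝ := (d : ℝ) with hD
  have hD2 : (2:ℝ) ≤ D := by rw [hD]; exact_mod_cast hd
  have hD0 : (0:ℝ) < D := by linarith
  have hD1 : (0:ℝ) < D - 1 := by linarith
  set r : ℝ := Real.sqrt ((D-1)/D * (γ - 1/D)) with hrdef
  have hl1 : l1 = 1/D + r := rfl
  clear_value l1
  clear_value D
  clear_value r
  set v : ℝ := (1 - l1)/(D-1) with hvdef
  clear_value v
  have hr0 : 0 ≤ r := by rw [hrdef]; exact Real.sqrt_nonneg _
  have harg : 0 ≤ (D-1)/D * (γ - 1/D) := by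
    apply mul_nonneg (by positivity)
    linarith
  have hr2 : r^2 = (D-1)/D * (γ - 1/D) := by rw [hrdef]; exact Real.sq_sqrt harg
  have hu_l : 1/D ≤ l1 := by rw [hl1]; linarith
  have hu_pos : 0 < l1 := lt_of_lt_of_le (by positivity) hu_l
  have hu1 : l1 ≤ 1 := by
    have h1 : (D-1)/D * (γ - 1/D) ≤ ((D-1)/D)^2 := by
      have h2 : γ - 1/D ≤ (D-1)/D := by
        have e : (D-1)/D = 1 - 1/D := by field_simp
        rw [e]; linarith
      have h3 : (0:ℝ) ≤ (D-1)/D := by positivity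
      nlinarith
    have h4 : r ≤ (D-1)/D := by
      calc r ≤ Real.sqrt (((D-1)/D)^2) := by rw [hrdef]; exact Real.sqrt_le_sqrt h1
        _ = (D-1)/D := Real.sqrt_sq (by positivity)
    rw [hl1]
    have : 1/D + (D-1)/D = 1 := by field_simp; ring
    linarith
  have hv0 : 0 ≤ v := by
    rw [hvdef]
    apply div_nonneg (by linarith) (by linarith)
  have hsum_uv : l1 + (D-1)*v = 1 := by
    rw [hvdef]; field_simp; ring
  have hvd : v ≤ 1/D := by
    rw [hvdef, div_le_div_iff₀ hD1 hD0]
    rw [hl1]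
    have h1D : (1/D)*D = 1 := by field_simp
    nlinarith [mul_nonneg hr0 hD0.le, h1D]
  have huv : v ≤ l1 := le_trans hvd hu_l
  have hveq : v = 1/D - r/(D-1) := by
    rw [hvdef, hl1]; field_simp; ring
  have hpur_uv : l1^2 + (D-1)*v^2 = γ := by
    rw [hl1, hveq]
    have e : (1/D + r)^2 + (D-1)*(1/D - r/(D-1))^2
        = 1/D + r^2*(D/(D-1)) := by field_simp; ring
    rw [e, hr2]
    field_simp
    ring
  -- the largest eigenvalue
  set i0 : Fin d := ⟨0, by omega⟩ with hi0
  set s : ℝ := lam i0 with hsdef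
  clear_value s
  have hmax : ∀ i, lam i ≤ s := by
    intro i
    rw [hsdef]
    exact hmono i0 i (by simp [hi0, Fin.le_def])
  have hs0 : 0 ≤ s := by rw [hsdef]; exact hpos i0
  -- tail sums
  set t : Finset (Fin d) := Finset.univ.erase i0 with ht
  have hts : ∑ i ∈ t, lam i = 1 - s := by
    have := Finset.add_sum_erase Finset.univ lam (Finset.mem_univ i0)
    rw [ht]; rw [hsum, ← hsdef] at this; linarith
  have hts2 : ∑ i ∈ t, lam i^2 = γ - s^2 := by
    have := Finset.add_sum_erase Finset.univ (fun i => lam i ^ 2) (Finset.mem_univ i0)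
    rw [ht]; rw [hpur, ← hsdef] at this; linarith
  have hcard : (t.card : ℝ) = D - 1 := by
    rw [ht, Finset.card_erase_of_mem (Finset.mem_univ i0), Finset.card_univ,
      Fintype.card_fin, Nat.cast_sub (by omega), Nat.cast_one, hD]
  have hCS : (1 - s)^2 ≤ (D-1) * (γ - s^2) := by
    have h := Finset.sum_mul_sq_le_sq_mul_sq t (fun _ => 1) lam
    simp only [one_mul, one_pow, Finset.sum_const, nsmul_eq_mul, mul_one] at h
    rw [hts, hts2, hcard] at h
    exact h
  have hr2' : D^2*r^2 = D*(D-1)*γ - (D-1) := by rw [hr2]; field_simp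
  have hgoal' : (D*s-1)^2 ≤ D^2*r^2 := by
    nlinarith [mul_le_mul_of_nonneg_left hCS hD0.le]
  have hDs : D*s - 1 ≤ D*r := by
    by_contra hcon
    push_neg at hcon
    nlinarith [mul_nonneg hD0.le hr0]
  have hs_le : s ≤ l1 := by
    rw [hl1]
    have h1D : D*(1/D) = 1 := by field_simp
    by_contra hcon
    push_neg at hcon
    have := mul_lt_mul_of_pos_left hcon hD0
    rw [mul_add, h1D] at this
    linarith
  have hall : ∀ i, lam i ≤ l1 := fun i => le_trans (hmax i) hs_le
  rcases eq_or_lt_of_le hv0 with hv00 | hvpos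
  · -- degenerate case v = 0, i.e. γ = 1
    have hl11 : l1 = 1 := by rw [← hv00] at hsum_uv; linarith
    have hγe : γ = 1 := by
      rw [← hv00, hl11] at hpur_uv
      simpa using hpur_uv.symm
    have hone : ∀ i, lam i ≤ 1 := fun i => le_trans (hall i) (le_of_eq hl11)
    have hsz : ∑ i, lam i * (1 - lam i) = 0 := by
      have e : ∀ i, lam i * (1 - lam i) = lam i - lam i^2 := fun i => by ring
      rw [Finset.sum_congr rfl (fun i _ => e i), Finset.sum_sub_distrib, hsum, hpur, hγe]
      ring
    have hz := (Finset.sum_eq_zero_iff_of_nonneg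
      (fun i _ => mul_nonneg (hpos i) (by linarith [hone i]))).mp hsz
    have hterm : ∀ i ∈ Finset.univ, lam i * Real.logb 2 (lam i) = 0 := by
      intro i hi
      rcases mul_eq_zero.mp (hz i hi) with h | h
      · rw [h]; ring
      · have h1 : lam i = 1 := by linarith
        rw [h1]; simp
    rw [Finset.sum_eq_zero hterm, hl11, ← hv00]
    simp
  · -- main case : 0 < v
    set c : ℝ := (l1*(Real.log l1 - Real.log v) - l1 + v)/(l1-v)^2 with hcdef
    have hpt : ∀ i ∈ Finset.univ, c*(lam i - v)^2
        ≤ lam i*(Real.log (lam i) - Real.log v) - lam i + v := by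
      intro i _
      rw [hcdef]
      exact aux_kl_quad hvpos huv (hpos i) (hall i)
    have hsum_le := Finset.sum_le_sum hpt
    have hLHS : ∑ i, c*(lam i - v)^2 = c*(l1 - v)^2 := by
      rw [← Finset.mul_sum]
      congr 1
      have e : ∀ i, (lam i - v)^2 = lam i^2 - (2*v)*lam i + v*v := fun i => by ring
      rw [Finset.sum_congr rfl (fun i _ => e i), Finset.sum_add_distrib,
        Finset.sum_sub_distrib, ← Finset.mul_sum, hpur, hsum,
        Finset.sum_const, Finset.card_univ, Fintype.card_fin, nsmul_eq_mul, ← hD]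
      linear_combination (-1)*hpur_uv + (2*v)*hsum_uv
    have hclv : c*(l1-v)^2 = l1*(Real.log l1 - Real.log v) - l1 + v := by
      rcases eq_or_lt_of_le huv with he | hlt
      · rw [← he]; ring
      · rw [hcdef]
        exact div_mul_cancel₀ _ (pow_ne_zero 2 (sub_ne_zero.mpr hlt.ne'))
    have hRHSsum : ∑ i, (lam i*(Real.log (lam i) - Real.log v) - lam i + v)
        = (∑ i, lam i * Real.log (lam i)) - Real.log v - 1 + D*v := by
      have e : ∀ i, lam i*(Real.log (lam i) - Real.log v) - lam i + v
          = lam i * Real.log (lam i) - Real.log v * lam i - lam i + v := fun i => by ring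
      rw [Finset.sum_congr rfl (fun i _ => e i), Finset.sum_add_distrib,
        Finset.sum_sub_distrib, Finset.sum_sub_distrib, ← Finset.mul_sum, hsum,
        Finset.sum_const, Finset.card_univ, Fintype.card_fin, nsmul_eq_mul, ← hD]
      ring
    have NATS : (∑ i, lam i * Real.log (lam i))
        ≥ l1 * Real.log l1 + (D-1)*(v * Real.log v) := by
      rw [hLHS, hclv, hRHSsum] at hsum_le
      have key : l1*(Real.log l1 - Real.log v) - l1 + v + Real.log v + 1 - D*v
          = l1*Real.log l1 + (D-1)*(v*Real.log v) := by
        linear_combination (-(Real.log v + 1))*hsum_uv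
      linarith [hsum_le, key]
    have hlog2 : 0 < Real.log 2 := Real.log_pos one_lt_two
    have hN : -∑ i, lam i * Real.log (lam i)
        ≤ -(l1 * Real.log l1) - (D-1)*(v * Real.log v) := by linarith [NATS]
    simp only [Real.logb, ← mul_div_assoc, ← Finset.sum_div, ← neg_div, ← sub_div]
    exact (div_le_div_iff_of_pos_right hlog2).mpr hN
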